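/- Let G be a finite group and C a nonzero right ideal of F_2 G. Define C^{(1)} = C and C^{(t+1)} = C^{(t)} * C (Schur product). Then there is a subgroup H \leq G such that C \subseteq K_H^G and C^{(t)} = K_H^G for all sufficiently large t, where K_H^G denotes the right ideal (\sum_{h\in H} h)·F_2 G. -/

import Mathlib

open MonoidAlgebra

attribute [local instance] Classical.propDecidable

/-- Coefficientwise (Schur) product on the group algebra. -/
noncomputable def schur {K G : Type*} [Semiring K] (f g : MonoidAlgebra K G) :
    MonoidAlgebra K G :=
  MonoidAlgebra.ofCoeff (Finsupp.zipWith (· * ·) (mul_zero 0) f.coeff g.coeff)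

/-- `C` is a right ideal of the group algebra. -/
def IsRightIdeal {K G : Type*} [Field K] [Group G]
    (C : Submodule K (MonoidAlgebra K G)) : Prop :=
  ∀ c ∈ C, ∀ v : MonoidAlgebra K G, c * v ∈ C

/-- Iterated Schur powers of a right ideal: `C^(1) = C`, `C^(t+1) = C^(t) * C`. -/
noncomputable def iterSchur {G : Type*} [Group G]
    (C : Submodule (ZMod 2) (MonoidAlgebra (ZMod 2) G)) :
    ℕ → Submodule (ZMod 2) (MonoidAlgebra (ZMod 2) G)
  | 0 => C
  | t + 1 => Submodule.span (ZMod 2)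
      {x : MonoidAlgebra (ZMod 2) G | ∃ a ∈ iterSchur C t, ∃ b ∈ C, x = schur a b}

section Aux
variable {G : Type*} [Group G]

lemma z2 (a : ZMod 2) : a = 0 ∨ a = 1 := by revert a; decide

lemma z2ne {a : ZMod 2} (h : a ≠ 0) : a = 1 := (z2 a).resolve_left h

lemma schur_apply (f g : MonoidAlgebra (ZMod 2) G) (x : G) : (schur f g).coeff x = f.coeff x * g.coeff x :=
  Finsupp.zipWith_apply (hf := mul_zero 0)

lemma ma_add_apply (x y : MonoidAlgebra (ZMod 2) G) (z : G) : (x + y).coeff z = x.coeff z + y.coeff z :=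
  Finsupp.add_apply x.coeff y.coeff z

lemma ma_smul_apply (r : ZMod 2) (x : MonoidAlgebra (ZMod 2) G) (z : G) : (r • x).coeff z = r * x.coeff z :=
  Finsupp.smul_apply r x.coeff z

lemma schur_self (f : MonoidAlgebra (ZMod 2) G) : schur f f = f := by
  ext x
  rw [schur_apply]
  rcases z2 (f.coeff x) with h | h <;> rw [h] <;> norm_num

lemma schur_assoc (a b c : MonoidAlgebra (ZMod 2) G) :
    schur (schur a b) c = schur a (schur b c) := by
  ext x; simp [schur_apply, mul_assoc]

lemma schur_zero_right (a : MonoidAlgebra (ZMod 2) G) : schur a 0 = 0 := by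
  ext x; simp [schur_apply]

lemma schur_add_right (a x y : MonoidAlgebra (ZMod 2) G) :
    schur a (x + y) = schur a x + schur a y := by
  ext z; rw [schur_apply, ma_add_apply, ma_add_apply, schur_apply, schur_apply, mul_add]

lemma schur_smul_right (r : ZMod 2) (a x : MonoidAlgebra (ZMod 2) G) :
    schur a (r • x) = r • schur a x := by
  ext z; rw [schur_apply, ma_smul_apply, ma_smul_apply, schur_apply]; ring

lemma schur_mem_iterSchur (C : Submodule (ZMod 2) (MonoidAlgebra (ZMod 2) G)) :
    ∀ t s (a b : MonoidAlgebra (ZMod 2) G), a ∈ iterSchur C s → b ∈ iterSchur C t →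
      schur a b ∈ iterSchur C (s + t + 1) := by
  intro t
  induction t with
  | zero =>
    intro s a b ha hb
    exact Submodule.subset_span ⟨a, ha, b, hb, rfl⟩
  | succ t ih =>
    intro s a b ha hb
    refine Submodule.span_induction (p := fun b _ => schur a b ∈ iterSchur C (s + (t+1) + 1))
      ?_ ?_ ?_ ?_ hb
    · rintro x ⟨b', hb', c, hc, rfl⟩
      rw [← schur_assoc]
      exact Submodule.subset_span ⟨schur a b', ih s a b' ha hb', c, hc, rfl⟩
    · show schur a 0 ∈ _
      rw [schur_zero_right]; exact Submodule.zero_mem _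
    · intro x y _ _ hx hy
      show schur a (x + y) ∈ _
      rw [schur_add_right]; exact Submodule.add_mem _ hx hy
    · intro r x _ hx
      show schur a (r • x) ∈ _
      rw [schur_smul_right]; exact Submodule.smul_mem _ _ hx

lemma mul_of_apply (f : MonoidAlgebra (ZMod 2) G) (g z : G) :
    (f * MonoidAlgebra.of (ZMod 2) G g).coeff z = f.coeff (z * g⁻¹) := by
  simp [MonoidAlgebra.of_apply, MonoidAlgebra.coeff_mul_single_apply]

lemma isRightIdeal_of_of (S : Submodule (ZMod 2) (MonoidAlgebra (ZMod 2) G))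
    (h : ∀ x ∈ S, ∀ g : G, x * MonoidAlgebra.of (ZMod 2) G g ∈ S) : IsRightIdeal S := by
  intro c hc v
  have hv : v = ∑ g ∈ v.coeff.support, (v.coeff g) • MonoidAlgebra.of (ZMod 2) G g := by
    conv_lhs => rw [← MonoidAlgebra.sum_coeff_single v]
    rw [Finsupp.sum]
    refine Finset.sum_congr rfl fun g _ => ?_
    rw [MonoidAlgebra.of_apply, MonoidAlgebra.smul_single, smul_eq_mul, mul_one]
  rw [hv, Finset.mul_sum]
  refine Submodule.sum_mem _ fun g _ => ?_
  rw [mul_smul_comm]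
  exact Submodule.smul_mem _ _ (h c hc g)

lemma schur_mul_of (a b : MonoidAlgebra (ZMod 2) G) (g : G) :
    schur a b * MonoidAlgebra.of (ZMod 2) G g
      = schur (a * MonoidAlgebra.of (ZMod 2) G g) (b * MonoidAlgebra.of (ZMod 2) G g) := by
  ext z; rw [mul_of_apply, schur_apply, schur_apply, mul_of_apply, mul_of_apply]

lemma iterSchur_isRightIdeal (C : Submodule (ZMod 2) (MonoidAlgebra (ZMod 2) G))
    (hI : IsRightIdeal C) : ∀ t, IsRightIdeal (iterSchur C t) := by
  intro t
  induction t with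
  | zero => exact hI
  | succ t ih =>
    refine isRightIdeal_of_of _ fun x hx g => ?_
    refine Submodule.span_induction
      (p := fun x _ => x * MonoidAlgebra.of (ZMod 2) G g ∈ iterSchur C (t+1)) ?_ ?_ ?_ ?_ hx
    · rintro y ⟨a, ha, b, hb, rfl⟩
      rw [schur_mul_of]
      exact Submodule.subset_span ⟨_, ih a ha _, _, hI b hb _, rfl⟩
    · show (0 : MonoidAlgebra (ZMod 2) G) * _ ∈ _
      rw [zero_mul]; exact Submodule.zero_mem _
    · intro y z _ _ hy hz
      show (y + z) * _ ∈ _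
      rw [add_mul]; exact Submodule.add_mem _ hy hz
    · intro r y _ hy
      show (r • y) * _ ∈ _
      rw [smul_mul_assoc]; exact Submodule.smul_mem _ _ hy

end Aux

section Main
variable {G : Type*} [Group G] [Fintype G]

lemma self_le_double (C : Submodule (ZMod 2) (MonoidAlgebra (ZMod 2) G)) (t : ℕ) :
    iterSchur C t ≤ iterSchur C (t + t + 1) := by
  intro a ha
  have := schur_mem_iterSchur C t t a a ha ha
  rwa [schur_self] at this


end Main

/-- Over `F₂`, the Schur powers of a nonzero right ideal eventually stabilize at
`K_H^G = (∑_{h ∈ H} h)·F₂G` for a subgroup `H ≤ G` containing `C`. -/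
theorem stmt14 {G : Type*} [Group G] [Fintype G]
    (C : Submodule (ZMod 2) (MonoidAlgebra (ZMod 2) G)) (hI : IsRightIdeal C)
    (hC : C ≠ ⊥) :
    ∃ (H : Subgroup G) (N : ℕ),
      C ≤ LinearMap.range (LinearMap.mulLeft (ZMod 2)
        (∑ h : H, MonoidAlgebra.of (ZMod 2) G (h : G))) ∧
      ∀ t ≥ N, iterSchur C t = LinearMap.range (LinearMap.mulLeft (ZMod 2)
        (∑ h : H, MonoidAlgebra.of (ZMod 2) G (h : G))) := by
  haveI : Finite (MonoidAlgebra (ZMod 2) G) := Finite.of_equiv _ MonoidAlgebra.coeffEquiv.symm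
  -- stabilization
  have hmono : Monotone (fun i => iterSchur C (2 ^ i - 1)) := by
    apply monotone_nat_of_le_succ
    intro i
    have h1 : 1 ≤ 2 ^ i := Nat.one_le_two_pow
    have h2 : 2 ^ (i + 1) - 1 = (2 ^ i - 1) + (2 ^ i - 1) + 1 := by
      have := pow_succ 2 i; omega
    simpa only [h2] using self_le_double C (2 ^ i - 1)
  obtain ⟨n, hn⟩ := monotone_stabilizes_iff_noetherian.mpr inferInstance
      ⟨fun i => iterSchur C (2 ^ i - 1), hmono⟩
  set N := 2 ^ n - 1 with hNdef
  set D := iterSchur C N with hDdef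
  have hDD : iterSchur C (N + N + 1) = D := by
    have h1 : 1 ≤ 2 ^ n := Nat.one_le_two_pow
    have h2 : 2 ^ (n + 1) - 1 = N + N + 1 := by
      have := pow_succ 2 n; omega
    have := (hn (n + 1) (Nat.le_succ n)).symm
    simpa only [OrderHom.coe_mk, h2] using this
  have hCD : C ≤ D := by
    have := hmono (Nat.zero_le n)
    exact this
  have hDschur : ∀ a b : MonoidAlgebra (ZMod 2) G, a ∈ D → b ∈ D → schur a b ∈ D := by
    intro a b ha hb
    have := schur_mem_iterSchur C N N a b ha hb
    rwa [hDD] at this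
  have hupper : ∀ t, iterSchur C t ≤ D := by
    intro t
    induction t with
    | zero => exact hCD
    | succ t ih =>
      refine Submodule.span_le.mpr ?_
      rintro x ⟨a, ha, b, hb, rfl⟩
      exact hDschur a b (ih ha) (hCD hb)
  have hlower : ∀ t, N ≤ t → D ≤ iterSchur C t := by
    intro t ht
    induction t, ht using Nat.le_induction with
    | base => exact le_rfl
    | succ t ht ih =>
      rw [← hDD]
      refine Submodule.span_le.mpr ?_
      rintro x ⟨a, ha, b, hb, rfl⟩
      exact Submodule.subset_span ⟨a, ih (hupper _ ha), b, hb, rfl⟩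
  have hstab : ∀ t, N ≤ t → iterSchur C t = D := fun t ht =>
    le_antisymm (hupper t) (hlower t ht)
  have hDI : IsRightIdeal D := iterSchur_isRightIdeal C hI N
  -- an element of D with coefficient 1 at the identity
  have hex : ∃ f, f ∈ D ∧ f.coeff 1 = 1 := by
    have hDne : D ≠ ⊥ := by
      intro h
      exact hC (le_bot_iff.mp (h ▸ hCD))
    obtain ⟨f0, hf0D, hf0⟩ := Submodule.exists_mem_ne_zero_of_ne_bot hDne
    have : ∃ g, f0.coeff g ≠ 0 := by
      by_contra h
      push_neg at h
      exact hf0 (MonoidAlgebra.ext (Finsupp.ext fun g => h g))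
    obtain ⟨g0, hg0⟩ := this
    refine ⟨f0 * MonoidAlgebra.of (ZMod 2) G g0⁻¹, hDI f0 hf0D _, ?_⟩
    rw [mul_of_apply, inv_inv, one_mul]
    exact z2ne hg0
  -- minimal support element e
  have hP : ∃ m, ∃ f, f ∈ D ∧ f.coeff 1 = 1 ∧ f.coeff.support.card = m := by
    obtain ⟨f, hf, h1⟩ := hex
    exact ⟨_, f, hf, h1, rfl⟩
  obtain ⟨e, heD, he1, hecard⟩ := Nat.find_spec hP
  have hminc : ∀ f, f ∈ D → f.coeff 1 = 1 → e.coeff.support.card ≤ f.coeff.support.card := by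
    intro f hf h1
    have := Nat.find_min' hP ⟨f, hf, h1, rfl⟩
    omega
  have hmin : ∀ f, f ∈ D → f.coeff 1 = 1 → ∀ x, e.coeff x = 1 → f.coeff x = 1 := by
    intro f hf h1 x hx
    have hm := hDschur e f heD hf
    have hm1 : (schur e f).coeff 1 = 1 := by rw [schur_apply, he1, h1, mul_one]
    have hsub : (schur e f).coeff.support ⊆ e.coeff.support := by
      intro y hy
      rw [Finsupp.mem_support_iff] at hy ⊢
      rw [schur_apply] at hy
      intro h0
      exact hy (by rw [h0, zero_mul])
    have heq : (schur e f).coeff.support = e.coeff.support :=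
      Finset.eq_of_subset_of_card_le hsub (hminc _ hm hm1)
    have hxs : x ∈ e.coeff.support := Finsupp.mem_support_iff.mpr (by rw [hx]; exact one_ne_zero)
    rw [← heq, Finsupp.mem_support_iff, schur_apply] at hxs
    rcases z2 (f.coeff x) with h | h
    · exact absurd (by rw [h, mul_zero]) hxs
    · exact h
  have hcoset : ∀ f, f ∈ D → ∀ g h : G, f.coeff g = 1 → e.coeff h = 1 → f.coeff (h * g) = 1 := by
    intro f hf g h hg hh
    have h1' : (f * MonoidAlgebra.of (ZMod 2) G g⁻¹).coeff 1 = 1 := by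
      rw [mul_of_apply, inv_inv, one_mul, hg]
    have := hmin _ (hDI f hf _) h1' h hh
    rwa [mul_of_apply, inv_inv] at this
  have hmul : ∀ a b : G, e.coeff a = 1 → e.coeff b = 1 → e.coeff (a * b) = 1 := fun a b ha hb =>
    hcoset e heD b a hb ha
  have hpow : ∀ a : G, e.coeff a = 1 → ∀ m : ℕ, e.coeff (a ^ m) = 1 := by
    intro a ha m
    induction m with
    | zero => rw [pow_zero]; exact he1
    | succ m ih => rw [pow_succ]; exact hmul _ _ ih ha
  have hinvmem : ∀ a : G, e.coeff a = 1 → e.coeff a⁻¹ = 1 := by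
    intro a ha
    have hpos : 0 < orderOf a := orderOf_pos a
    have h1 : a * a ^ (orderOf a - 1) = 1 := by
      rw [← pow_succ', Nat.sub_add_cancel hpos, pow_orderOf_eq_one]
    rw [inv_eq_of_mul_eq_one_right h1]
    exact hpow a ha _
  set H : Subgroup G :=
    { carrier := {x | e.coeff x = 1}
      one_mem' := he1
      mul_mem' := fun {a b} ha hb => hmul a b ha hb
      inv_mem' := fun {a} ha => hinvmem a ha } with hHdef
  have hinvar : ∀ f, f ∈ D → ∀ h g : G, e.coeff h = 1 → f.coeff (h * g) = f.coeff g := by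
    intro f hf h g hh
    rcases z2 (f.coeff g) with h0 | h1
    · rcases z2 (f.coeff (h * g)) with h0' | h1'
      · rw [h0, h0']
      · exfalso
        have := hcoset f hf (h * g) h⁻¹ h1' (hinvmem h hh)
        rw [inv_mul_cancel_left] at this
        rw [this] at h0
        exact one_ne_zero h0
    · rw [h1]
      exact hcoset f hf g h h1 hh
  -- the sum over H equals e
  have hk : (∑ h : H, MonoidAlgebra.of (ZMod 2) G (h : G)) = e := by
    ext z
    rw [MonoidAlgebra.coeff_sum, Finsupp.finset_sum_apply]
    by_cases hz : e.coeff z = 1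
    · rw [Finset.sum_eq_single (⟨z, hz⟩ : H)]
      · rw [MonoidAlgebra.of_apply, hz]
        simp [MonoidAlgebra.coeff_single_apply]
      · intro b _ hb
        rw [MonoidAlgebra.of_apply, MonoidAlgebra.coeff_single_apply, if_neg]
        intro hbz
        exact hb (Subtype.ext hbz)
      · intro hmem
        exact absurd (Finset.mem_univ _) hmem
    · rw [Finset.sum_eq_zero, ((z2 (e.coeff z)).resolve_right hz)]
      intro b _
      rw [MonoidAlgebra.of_apply, MonoidAlgebra.coeff_single_apply, if_neg]
      intro hbz
      exact hz (hbz ▸ b.2)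
  set K := LinearMap.range (LinearMap.mulLeft (ZMod 2)
      (∑ h : H, MonoidAlgebra.of (ZMod 2) G (h : G))) with hKdef
  have hKD : K ≤ D := by
    rintro x ⟨v, rfl⟩
    rw [LinearMap.mulLeft_apply, hk]
    exact hDI e heD v
  have hDK : D ≤ K := by
    intro f hf
    set s := QuotientGroup.rightRel H with hsdef
    letI : DecidableRel ((· ≈ ·) : G → G → Prop) := fun a b => Classical.propDecidable _
    refine ⟨∑ q : Quotient s, MonoidAlgebra.single (Quotient.out q) (f.coeff (Quotient.out q)), ?_⟩
    rw [LinearMap.mulLeft_apply, hk]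
    ext z
    rw [Finset.mul_sum, MonoidAlgebra.coeff_sum, Finsupp.finset_sum_apply]
    have hterm : ∀ q : Quotient s,
        (e * MonoidAlgebra.single (Quotient.out q) (f.coeff (Quotient.out q))).coeff z
          = e.coeff (z * (Quotient.out q)⁻¹) * f.coeff (Quotient.out q) := fun q =>
      MonoidAlgebra.coeff_mul_single_apply e (f.coeff (Quotient.out q)) (Quotient.out q) z
    rw [Finset.sum_congr rfl fun q _ => hterm q]
    rw [Finset.sum_eq_single (Quotient.mk s z)]
    · have hr : z * (Quotient.out (Quotient.mk s z))⁻¹ ∈ H := by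
        rw [← QuotientGroup.rightRel_apply]
        exact Quotient.exact (Quotient.out_eq (Quotient.mk s z))
      have he' : e.coeff (z * (Quotient.out (Quotient.mk s z))⁻¹) = 1 := hr
      rw [he', one_mul]
      have := hinvar f hf (z * (Quotient.out (Quotient.mk s z))⁻¹)
        (Quotient.out (Quotient.mk s z)) he'
      rw [inv_mul_cancel_right] at this
      exact this.symm
    · intro q _ hq
      rcases z2 (e.coeff (z * (Quotient.out q)⁻¹)) with h0 | h1
      · rw [h0, zero_mul]
      · exfalso
        apply hq
        have hr : s (Quotient.out q) z := QuotientGroup.rightRel_apply.mpr h1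
        rw [← Quotient.out_eq q]
        exact (Quotient.sound hr).symm ▸ rfl
    · intro hmem
      exact absurd (Finset.mem_univ _) hmem
  have hDKeq : D = K := le_antisymm hDK hKD
  exact ⟨H, N, le_trans hCD (hDKeq ▸ le_rfl), fun t ht => by rw [hstab t ht, hDKeq]⟩
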